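/- f(3,q) ≤ 2^{q+1} (q+1)!: every word of length 2^{q+1}(q+1)! over an alphabet of size q contains a copy of Z_3. -/

import Mathlib

open List

/-- A word is *reduced* if equal letters occur only at distance `< 2`. -/
def Red {α : Type*} (B : List α) : Prop :=
  ∀ s t : ℕ, s + 2 ≤ t → t < B.length → B[s]? ≠ B[t]?

def recon {α : Type*} [DecidableEq α] (B : List α) : List α :=
  B.dedup.flatMap (fun z => if 2 ≤ B.count z then [z, z] else [z])

lemma red_cons {α : Type*} {z : α} {rest : List α} (h : Red (z :: rest)) : Red rest := by
  intro s t hst ht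
  have := h (s+1) (t+1) (by omega) (by simpa using Nat.succ_lt_succ ht)
  simpa using this

lemma red_head_not_mem {α : Type*} {z b : α} {rest : List α} (h : Red (z :: b :: rest))
    (hzb : z ≠ b) : z ∉ b :: rest := by
  intro hm
  obtain ⟨k, hk, hgk⟩ := List.getElem_of_mem hm
  rcases Nat.eq_zero_or_pos k with rfl | hkpos
  · simp at hgk; exact hzb hgk.symm
  · have h2 : (z :: b :: rest)[k+1]? = some z := by
      rw [List.getElem?_cons_succ, List.getElem?_eq_getElem hk, hgk]
    refine h 0 (k+1) (by omega) (by simpa using Nat.succ_lt_succ hk) ?_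
    rw [h2]; rfl

lemma red_head2_not_mem {α : Type*} {z : α} {rest : List α} (h : Red (z :: z :: rest)) :
    z ∉ rest := by
  intro hm
  obtain ⟨k, hk, hgk⟩ := List.getElem_of_mem hm
  have h2 : (z :: z :: rest)[k+2]? = some z := by
    rw [List.getElem?_cons_succ, List.getElem?_cons_succ, List.getElem?_eq_getElem hk, hgk]
  refine h 0 (k+2) (by omega) (by simpa using Nat.succ_lt_succ (Nat.succ_lt_succ hk)) ?_
  rw [h2]; rfl

lemma recon_eq_aux {α : Type*} [DecidableEq α] (n : ℕ) :
    ∀ B : List α, B.length ≤ n → Red B → recon B = B := by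
  induction n with
  | zero =>
    intro B hB _
    have : B = [] := by cases B <;> simp_all
    simp [this, recon]
  | succ n ih =>
    intro B hB hred
    match B with
    | [] => simp [recon]
    | [z] => simp [recon]
    | z :: b :: rest₂ =>
      by_cases hzb : z = b
      · subst hzb
        have hz2 : z ∉ rest₂ := red_head2_not_mem hred
        have hcnt : (z :: z :: rest₂).count z = 2 := by
          simp [List.count_cons, List.count_eq_zero_of_not_mem hz2]
        have hded : (z :: z :: rest₂).dedup = z :: rest₂.dedup := by
          rw [List.dedup_cons_of_mem (by simp), List.dedup_cons_of_notMem hz2]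
        have hcong : rest₂.dedup.flatMap (fun y => if 2 ≤ (z :: z :: rest₂).count y then [y,y] else [y])
              = rest₂.dedup.flatMap (fun y => if 2 ≤ rest₂.count y then [y,y] else [y]) := by
          refine List.flatMap_congr fun y hy => ?_
          have hyz : y ≠ z := fun h => hz2 (h ▸ List.mem_dedup.mp hy)
          rw [List.count_cons_of_ne hyz.symm, List.count_cons_of_ne hyz.symm]
        have hrest : recon rest₂ = rest₂ :=
          ih rest₂ (by simp at hB ⊢; omega) (red_cons (red_cons hred))
        rw [recon] at hrest
        rw [recon, hded, List.flatMap_cons, hcnt, hcong, hrest]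
        norm_num
      · have hz1 : z ∉ b :: rest₂ := red_head_not_mem hred hzb
        have hcnt : (z :: b :: rest₂).count z = 1 := by
          simp [List.count_cons, List.count_eq_zero_of_not_mem hz1]
        have hded : (z :: b :: rest₂).dedup = z :: (b :: rest₂).dedup :=
          List.dedup_cons_of_notMem hz1
        have hcong : (b :: rest₂).dedup.flatMap (fun y => if 2 ≤ (z :: b :: rest₂).count y then [y,y] else [y])
              = (b :: rest₂).dedup.flatMap (fun y => if 2 ≤ (b :: rest₂).count y then [y,y] else [y]) := by
          refine List.flatMap_congr fun y hy => ?_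
          have hyz : y ≠ z := fun h => hz1 (h ▸ List.mem_dedup.mp hy)
          rw [List.count_cons_of_ne hyz.symm]
        have hrest : recon (b :: rest₂) = b :: rest₂ :=
          ih _ (by simp at hB ⊢; omega) (red_cons hred)
        rw [recon] at hrest
        rw [recon, hded, List.flatMap_cons, hcnt, hcong, hrest]
        norm_num

lemma recon_eq {α : Type*} [DecidableEq α] (B : List α) (h : Red B) : recon B = B :=
  recon_eq_aux B.length B le_rfl h

lemma red_ext {α : Type*} [DecidableEq α] {B B' : List α} (hB : Red B) (hB' : Red B')
    (hd : B.dedup = B'.dedup)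
    (hc : ∀ y ∈ B.dedup, (2 ≤ B.count y ↔ 2 ≤ B'.count y)) : B = B' := by
  rw [← recon_eq B hB, ← recon_eq B' hB', recon, recon, hd]
  refine List.flatMap_congr fun y hy => ?_
  rw [← hd] at hy
  by_cases h2 : 2 ≤ B.count y
  · rw [if_pos h2, if_pos ((hc y hy).mp h2)]
  · rw [if_neg h2, if_neg (fun h => h2 ((hc y hy).mpr h))]


variable {q : ℕ}

def extList (q : ℕ) (l : List (Fin q)) : List (Fin q) :=
  l ++ (List.finRange q).filter (fun y => y ∉ l)

lemma extList_nodup (l : List (Fin q)) (h : l.Nodup) : (extList q l).Nodup := by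
  rw [extList, List.nodup_append]
  refine ⟨h, List.Nodup.filter _ (List.nodup_finRange q), ?_⟩
  intro a ha b hb hab
  subst hab
  have := List.of_mem_filter hb
  simp at this; exact this ha

lemma extList_mem (l : List (Fin q)) (y : Fin q) : y ∈ extList q l := by
  by_cases h : y ∈ l
  · exact List.mem_append_left _ h
  · exact List.mem_append_right _ (List.mem_filter.mpr ⟨List.mem_finRange y, by simpa using h⟩)

lemma extList_length (l : List (Fin q)) (h : l.Nodup) : (extList q l).length = q := by
  have hnd := extList_nodup l h
  have : (extList q l).toFinset = Finset.univ := by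
    ext y; simp [extList_mem l y]
  have hcard := List.toFinset_card_of_nodup hnd
  rw [this] at hcard
  simpa using hcard.symm

lemma length_le_of_nodup (l : List (Fin q)) (h : l.Nodup) : l.length ≤ q := by
  have h1 := extList_length l h
  have h2 := List.length_append (as := l) (bs := (List.finRange q).filter (fun y => y ∉ l))
  rw [extList] at h1
  omega

noncomputable def extPerm (l : List (Fin q)) (h : l.Nodup) : Equiv.Perm (Fin q) :=
  Equiv.ofBijective (fun i => (extList q l).get (Fin.cast (extList_length l h).symm i))
    (by
      have hinj : Function.Injective (fun i : Fin q => (extList q l).get (Fin.cast (extList_length l h).symm i)) := by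
        intro a b hab
        have := (List.nodup_iff_injective_get.mp (extList_nodup l h)) hab
        exact Fin.cast_injective _ this
      exact (Finite.injective_iff_bijective).mp hinj)

lemma extPerm_apply (l : List (Fin q)) (h : l.Nodup) (i : ℕ) (hi : i < l.length) (hiq : i < q) :
    extPerm l h ⟨i, hiq⟩ = l[i]'hi := by
  show (extList q l).get _ = _
  rw [List.get_eq_getElem]
  simp only [Fin.coe_cast]
  exact List.getElem_append_left hi

lemma dedup_append_nodup (x : Fin q) (B : List (Fin q)) (h : x ∉ B.dedup) :
    (B.dedup ++ [x]).Nodup := by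
  rw [List.nodup_append]
  refine ⟨List.nodup_dedup B, List.nodup_singleton x, fun a ha b hax hab => ?_⟩
  subst hab
  simp at hax
  exact h (hax ▸ ha)

/-- Encoding of a window type `(x, B)` into a permutation and a flag vector. -/
noncomputable def encode (x : Fin q) (B : List (Fin q)) : Equiv.Perm (Fin q) × (Fin q → Bool) :=
  if B = [x] then (Equiv.swap ⟨0, x.pos⟩ x, fun _ => false)
  else if h : x ∈ B.dedup then (1, fun _ => true)
  else (extPerm (B.dedup ++ [x]) (dedup_append_nodup x B h),
    fun i => if hil : i.val < B.dedup.length then decide (2 ≤ B.count (B.dedup[i.val]'hil))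
      else decide (i.val = B.dedup.length))

lemma encode_eq_general (x : Fin q) (B : List (Fin q)) (hBx : B ≠ [x]) (hx : x ∉ B.dedup) :
    encode x B = (extPerm (B.dedup ++ [x]) (dedup_append_nodup x B hx),
      fun i => if hil : i.val < B.dedup.length then decide (2 ≤ B.count (B.dedup[i.val]'hil))
        else decide (i.val = B.dedup.length)) := by
  rw [encode, if_neg hBx, dif_neg hx]

lemma r_lt_q (x : Fin q) (B : List (Fin q)) (hx : x ∉ B.dedup) : B.dedup.length < q := by
  have := length_le_of_nodup _ (dedup_append_nodup x B hx)
  simp at this; omega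

lemma encode_general_snd_at_r (x : Fin q) (B : List (Fin q)) (hBx : B ≠ [x]) (hx : x ∉ B.dedup) :
    (encode x B).2 ⟨B.dedup.length, r_lt_q x B hx⟩ = true := by
  rw [encode_eq_general x B hBx hx]
  simp

lemma encode_general_snd_above (x : Fin q) (B : List (Fin q)) (hBx : B ≠ [x]) (hx : x ∉ B.dedup)
    (i : Fin q) (hi : B.dedup.length < i.val) : (encode x B).2 i = false := by
  rw [encode_eq_general x B hBx hx]
  simp only
  rw [dif_neg (by omega)]
  simp; omega

lemma encode_general_snd_below (x : Fin q) (B : List (Fin q)) (hBx : B ≠ [x]) (hx : x ∉ B.dedup)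
    (i : Fin q) (hi : i.val < B.dedup.length) :
    (encode x B).2 i = decide (2 ≤ B.count (B.dedup[i.val]'hi)) := by
  rw [encode_eq_general x B hBx hx]
  simp only
  rw [dif_pos hi]

lemma encode_general_fst (x : Fin q) (B : List (Fin q)) (hBx : B ≠ [x]) (hx : x ∉ B.dedup)
    (i : ℕ) (hiq : i < q) (hi : i ≤ B.dedup.length) :
    (encode x B).1 ⟨i, hiq⟩ = if h : i < B.dedup.length then B.dedup[i]'h else x := by
  rw [encode_eq_general x B hBx hx]
  simp only
  rw [extPerm_apply _ _ i (by simp; omega) hiq]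
  by_cases h : i < B.dedup.length
  · rw [dif_pos h, List.getElem_append_left h]
  · rw [dif_neg h]
    have : i = B.dedup.length := by omega
    subst this
    rw [List.getElem_append_right (le_refl _)]
    simp

def F0 (q : ℕ) : Fin q → Bool := fun i => decide (i.val = 0)

lemma dedup_len_pos {B : List (Fin q)} (hne : B ≠ []) : 0 < B.dedup.length := by
  rcases Nat.eq_zero_or_pos B.dedup.length with h | h
  · exact absurd ((List.dedup_eq_nil _).mp (List.length_eq_zero_iff.mp h)) hne
  · exact h

lemma encode_snd_ne_F0 (x : Fin q) (B : List (Fin q)) (hne : B ≠ [])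
    (halt : B = [x] ∨ x ∉ B) : (encode x B).2 ≠ F0 q := by
  by_cases hBx : B = [x]
  · rw [encode, if_pos hBx]
    intro hc
    have := congrFun hc ⟨0, x.pos⟩
    simp [F0] at this
  · have hx : x ∉ B := halt.resolve_left hBx
    have hxd : x ∉ B.dedup := fun hc => hx (List.mem_dedup.mp hc)
    intro hc
    have h1 := congrFun hc ⟨B.dedup.length, r_lt_q x B hxd⟩
    rw [encode_general_snd_at_r x B hBx hxd] at h1
    have h2 := dedup_len_pos hne
    rw [show F0 q ⟨B.dedup.length, r_lt_q x B hxd⟩ = decide (B.dedup.length = 0) from rfl] at h1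
    have h3 : B.dedup.length = 0 := by exact_mod_cast of_decide_eq_true h1.symm
    omega

lemma encode_inj (x x' : Fin q) (B B' : List (Fin q))
    (hne : B ≠ []) (hred : Red B) (halt : B = [x] ∨ x ∉ B)
    (hne' : B' ≠ []) (hred' : Red B') (halt' : B' = [x'] ∨ x' ∉ B')
    (h : encode x B = encode x' B') : x = x' ∧ B = B' := by
  by_cases hBx : B = [x] <;> by_cases hBx' : B' = [x']
  · -- both diagonal
    have h1 := congrArg (fun p => p.1 ⟨0, x.pos⟩) h
    rw [encode, if_pos hBx, encode, if_pos hBx'] at h1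
    simp only at h1
    have hxx : x = x' := by
      rw [show (⟨0, x.pos⟩ : Fin q) = ⟨0, x'.pos⟩ from rfl] at h1
      rwa [Equiv.swap_apply_left, Equiv.swap_apply_left] at h1
    exact ⟨hxx, by rw [hBx, hBx', hxx]⟩
  · -- B diagonal, B' general
    exfalso
    have hx' : x' ∉ B' := halt'.resolve_left hBx'
    have hxd' : x' ∉ B'.dedup := fun hc => hx' (List.mem_dedup.mp hc)
    have h1 := congrFun (congrArg Prod.snd h) ⟨B'.dedup.length, r_lt_q x' B' hxd'⟩
    rw [encode_general_snd_at_r x' B' hBx' hxd'] at h1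
    rw [encode, if_pos hBx] at h1
    simp at h1
  · -- B general, B' diagonal
    exfalso
    have hx : x ∉ B := halt.resolve_left hBx
    have hxd : x ∉ B.dedup := fun hc => hx (List.mem_dedup.mp hc)
    have h1 := congrFun (congrArg Prod.snd h) ⟨B.dedup.length, r_lt_q x B hxd⟩
    rw [encode_general_snd_at_r x B hBx hxd] at h1
    rw [encode, if_pos hBx'] at h1
    simp at h1
  · -- both general
    have hx : x ∉ B := halt.resolve_left hBx
    have hxd : x ∉ B.dedup := fun hc => hx (List.mem_dedup.mp hc)
    have hx' : x' ∉ B' := halt'.resolve_left hBx'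
    have hxd' : x' ∉ B'.dedup := fun hc => hx' (List.mem_dedup.mp hc)
    have hrq := r_lt_q x B hxd
    have hrq' := r_lt_q x' B' hxd'
    have hsnd := congrArg Prod.snd h
    -- r = r'
    have hrr : B.dedup.length = B'.dedup.length := by
      rcases lt_trichotomy B.dedup.length B'.dedup.length with hlt | heq | hgt
      · exfalso
        have h1 := congrFun hsnd ⟨B'.dedup.length, hrq'⟩
        rw [encode_general_snd_at_r x' B' hBx' hxd'] at h1
        rw [encode_general_snd_above x B hBx hxd _ (by simpa using hlt)] at h1
        exact Bool.noConfusion h1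
      · exact heq
      · exfalso
        have h1 := congrFun hsnd ⟨B.dedup.length, hrq⟩
        rw [encode_general_snd_at_r x B hBx hxd] at h1
        rw [encode_general_snd_above x' B' hBx' hxd' _ (by simpa using hgt)] at h1
        exact Bool.noConfusion h1.symm
    -- x = x'
    have hxx : x = x' := by
      have h1 := congrArg (fun p => p.1 ⟨B.dedup.length, hrq⟩) h
      rw [encode_general_fst x B hBx hxd _ _ le_rfl] at h1
      rw [show (⟨B.dedup.length, hrq⟩ : Fin q) = ⟨B'.dedup.length, hrq'⟩ by
        simp [hrr]] at h1
      rw [encode_general_fst x' B' hBx' hxd' _ _ le_rfl] at h1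
      rwa [dif_neg (lt_irrefl _), dif_neg (lt_irrefl _)] at h1
    -- dedups equal
    have hded : B.dedup = B'.dedup := by
      apply List.ext_getElem hrr
      intro i h1 h2
      have hiq : i < q := by omega
      have hg := congrArg (fun p => p.1 ⟨i, hiq⟩) h
      rw [encode_general_fst x B hBx hxd _ _ (le_of_lt h1)] at hg
      rw [encode_general_fst x' B' hBx' hxd' _ _ (le_of_lt h2)] at hg
      rwa [dif_pos h1, dif_pos h2] at hg
    -- counts flags equal
    have hB : B = B' := by
      refine red_ext hred hred' hded fun y hy => ?_
      obtain ⟨i, hi, hiy⟩ := List.getElem_of_mem hy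
      have hiq : i < q := by omega
      have hg := congrFun hsnd ⟨i, hiq⟩
      rw [encode_general_snd_below x B hBx hxd _ hi] at hg
      rw [encode_general_snd_below x' B' hBx' hxd' _ (hrr ▸ hi)] at hg
      simp only [Fin.val_mk] at hg
      have h4 : B'.dedup[i]? = some y := by
        rw [← hded, List.getElem?_eq_getElem hi, hiy]
      have h5 : B'.dedup[i]'(hrr ▸ hi) = y := by
        have h6 := List.getElem?_eq_getElem (l := B'.dedup) (i := i) (hrr ▸ hi)
        rw [h4] at h6
        exact (Option.some.inj h6).symm
      rw [hiy, h5] at hg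
      exact decide_eq_decide.mp hg
    exact ⟨hxx, hB⟩



lemma getElem?_congr' {α : Type*} {l : List α} {a b : ℕ} (ha : a < l.length)
    (hb : b < l.length) (h : l[a] = l[b]) : l[a]? = l[b]? := by
  rw [List.getElem?_eq_getElem ha, List.getElem?_eq_getElem hb, h]

lemma getElem_congr'' {α : Type*} {l : List α} {a b : ℕ} (ha : a < l.length)
    (hb : b < l.length) (h : l[a]? = l[b]?) : l[a] = l[b] := by
  rw [List.getElem?_eq_getElem ha, List.getElem?_eq_getElem hb] at h
  exact Option.some.inj h

def PairAt {q : ℕ} (v : List (Fin q)) (m : ℕ) : Prop :=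
  2 ≤ m ∧ ∃ i, i + m < v.length ∧ v[i]? = v[i+m]?

set_option maxHeartbeats 2000000 in
lemma window_type (q : ℕ) (v : List (Fin q)) (hv : v.length = 2*q+1) :
    ∃ x B, B ≠ [] ∧ Red B ∧ (B = [x] ∨ x ∉ B) ∧ ([x] ++ B ++ [x]) <:+: v := by
  classical
  -- pigeonhole : two equal letters at distance ≥ 2
  have hpig : ∃ i m, 2 ≤ m ∧ i + m < v.length ∧ v[i]? = v[i+m]? := by
    have hcard : Fintype.card (Fin q) < Fintype.card (Fin (q+1)) := by simp
    obtain ⟨k, k', hkk, hg⟩ := Fintype.exists_ne_map_eq_of_card_lt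
      (fun k : Fin (q+1) => v[2*k.val]'(by have := k.isLt; omega)) hcard
    have hk1 := k.isLt
    have hk2 := k'.isLt
    rcases Nat.lt_or_ge k.val k'.val with hlt | hge
    · refine ⟨2*k.val, 2*(k'.val - k.val), by omega, by omega, ?_⟩
      rw [show 2*k.val + 2*(k'.val - k.val) = 2*k'.val by omega]
      exact getElem?_congr' (by omega) (by omega) hg
    · have hlt : k'.val < k.val := by omega
      refine ⟨2*k'.val, 2*(k.val - k'.val), by omega, by omega, ?_⟩
      rw [show 2*k'.val + 2*(k.val - k'.val) = 2*k.val by omega]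
      exact getElem?_congr' (by omega) (by omega) hg.symm
  obtain ⟨i₁, m₁, hm₁⟩ := hpig
  have hQ₁ : PairAt v m₁ := ⟨hm₁.1, i₁, hm₁.2.1, hm₁.2.2⟩
  have hex : ∃ m, PairAt v m := ⟨m₁, hQ₁⟩
  set m₀ := Nat.find hex with hm₀def
  have hspec : PairAt v m₀ := Nat.find_spec hex
  have hmin : ∀ m, m < m₀ → ¬ PairAt v m := fun m hm => Nat.find_min hex (hm₀def ▸ hm)
  clear_value m₀
  obtain ⟨hm₀2, i₀, hi₀, heq⟩ := hspec
  have hx0 : i₀ < v.length := by omega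
  obtain ⟨x, hxdef⟩ : ∃ x, x = v[i₀]'hx0 := ⟨_, rfl⟩
  obtain ⟨B, hBdef⟩ : ∃ B, B = (v.drop (i₀+1)).take (m₀-1) := ⟨_, rfl⟩
  have hBlen : B.length = m₀ - 1 := by
    subst hBdef
    simp
    omega
  have hBne : B ≠ [] := by
    intro hc
    rw [hc] at hBlen
    simp at hBlen
    omega
  have hBg : ∀ s (hs : s < m₀ - 1), B[s]'(lt_of_lt_of_eq hs hBlen.symm) = v[i₀+1+s]'(by omega) := by
    intro s hs
    subst hBdef
    rw [List.getElem_take, List.getElem_drop]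
  have heq' : v[i₀+m₀]'(by omega) = x := by
    rw [hxdef]
    exact (getElem_congr'' hx0 (by omega) heq).symm
  -- the pair-of-positions contradiction machine
  have hpair : ∀ a b : ℕ, ∀ (hab : a + 2 ≤ b) (hbv : b < v.length),
      v[a]'(by omega) = v[b]'(by omega) → m₀ ≤ b - a := by
    intro a b hab hbv hveq
    by_contra hc
    refine hmin (b - a) (by omega) ⟨by omega, a, by omega, ?_⟩
    rw [show a + (b - a) = b by omega]
    exact getElem?_congr' (by omega) (by omega) hveq
  have hinfix : ([x] ++ B ++ [x]) <:+: v := by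
    subst hBdef hxdef
    have hd1 : v.drop i₀ = v[i₀]'hx0 :: v.drop (i₀+1) := List.drop_eq_getElem_cons hx0
    have hd2 : v.drop (i₀+1) = (v.drop (i₀+1)).take (m₀-1) ++ v.drop (i₀+m₀) := by
      conv_lhs => rw [← List.take_append_drop (m₀-1) (v.drop (i₀+1))]
      congr 1
      rw [List.drop_drop]
      congr 1
      omega
    have hd3 : v.drop (i₀+m₀) = v[i₀]'hx0 :: v.drop (i₀+m₀+1) := by
      rw [List.drop_eq_getElem_cons (by omega : i₀ + m₀ < v.length), heq']
    refine ⟨v.take i₀, v.drop (i₀+m₀+1), ?_⟩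
    conv_rhs => rw [← List.take_append_drop i₀ v, hd1, hd2, hd3]
    simp
  refine ⟨x, B, hBne, ?_, ?_, hinfix⟩
  · -- Red B
    intro s t hst ht hc
    rw [hBlen] at ht
    have hcv : v[i₀+1+s]'(by omega) = v[i₀+1+t]'(by omega) := by
      rw [← hBg s (by omega), ← hBg t (by omega)]
      exact getElem_congr'' (by omega) (by omega) hc
    have := hpair (i₀+1+s) (i₀+1+t) (by omega) (by omega) hcv
    omega
  · -- B = [x] ∨ x ∉ B
    by_cases hxB : x ∈ B
    · obtain ⟨s, hs, hsx⟩ := List.getElem_of_mem hxB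
      rw [hBlen] at hs
      have hs0 : s = 0 := by
        by_contra hcon
        have hveq : v[i₀]'hx0 = v[i₀+1+s]'(by omega) :=
          hxdef.symm.trans (hsx.symm.trans (hBg s hs))
        have := hpair i₀ (i₀+1+s) (by omega) (by omega) hveq
        omega
      subst hs0
      have hB1 : B.length = 1 := by
        by_contra hcon
        have h2 : 2 ≤ B.length := by omega
        have hveq : v[i₀+1]'(by omega) = v[i₀+m₀]'(by omega) :=
          ((hBg 0 hs).symm.trans hsx).trans heq'.symm
        have := hpair (i₀+1) (i₀+m₀) (by omega) (by omega) hveq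
        omega
      left
      obtain ⟨a, ha⟩ := List.length_eq_one_iff.mp hB1
      have h9 : B[0]'(by omega) = a := by
        simp only [ha]
        rfl
      have hax : a = x := h9.symm.trans hsx
      rw [ha, hax]
    · right; exact hxB

/-- `f(3,q) ≤ 2^{q+1} (q+1)!`: every word of length `2^{q+1}(q+1)!` over an
alphabet of size `q` contains a copy of `Z₃ = abacaba`. -/
theorem f_three_upper (q : ℕ) (w : List (Fin q))
    (hw : w.length = 2 ^ (q + 1) * (q + 1).factorial) :
    ∃ A B C : List (Fin q), A ≠ [] ∧ B ≠ [] ∧ C ≠ [] ∧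
      (A ++ B ++ A ++ C ++ A ++ B ++ A) <:+: w := by
  classical
  rcases Nat.eq_zero_or_pos q with rfl | hq
  · -- q = 0 : impossible, w would be a nonempty list over an empty alphabet
    exfalso
    match w, hw with
    | a :: _, _ => exact a.elim0
  -- setup
  set K := 2 ^ q * q.factorial with hKdef
  have hK1 : 1 ≤ K := by
    have := Nat.mul_pos (pow_pos (show 0 < 2 by norm_num) q) q.factorial_pos
    omega
  have hKL : w.length = (2*q+2) * K := by
    rw [hw, Nat.factorial_succ, hKdef, pow_succ]
    ring
  -- the windows
  have hwin : ∀ t : Fin K, ((w.drop ((2*q+2)*t.val)).take (2*q+1)).length = 2*q+1 := by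
    intro t
    have ht := t.isLt
    have hmul : (2*q+2) * (t.val+1) ≤ (2*q+2) * K := Nat.mul_le_mul_left _ ht
    have hexp : (2*q+2)*(t.val+1) = (2*q+2)*t.val + (2*q+2) := by ring
    simp [hKL]
    omega
  have H : ∀ t : Fin K, ∃ x B, B ≠ [] ∧ Red B ∧ (B = [x] ∨ x ∉ B) ∧
      ([x] ++ B ++ [x]) <:+: ((w.drop ((2*q+2)*t.val)).take (2*q+1)) :=
    fun t => window_type q _ (hwin t)
  choose x B hBne hBred hBalt hBinf using H
  -- pigeonhole
  have hpig : ∃ t t' : Fin K, t ≠ t' ∧ encode (x t) (B t) = encode (x t') (B t') := by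
    by_contra hcon
    push_neg at hcon
    have hinj : Function.Injective (fun t : Fin K => encode (x t) (B t)) := by
      intro a b hab
      by_contra hne
      exact hcon a b hne hab
    have hcard : Fintype.card (Fin K) =
        Fintype.card (Equiv.Perm (Fin q) × (Fin q → Bool)) := by
      simp [Fintype.card_perm, hKdef, Fintype.card_fun]
      ring
    have hbij := (Fintype.bijective_iff_injective_and_card _).mpr ⟨hinj, hcard⟩
    obtain ⟨t, ht⟩ := hbij.surjective (1, F0 q)
    have := encode_snd_ne_F0 (x t) (B t) (hBne t) (hBalt t)
    simp only at ht
    rw [ht] at this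
    exact this rfl
  obtain ⟨t, t', htt, henc⟩ := hpig
  obtain ⟨hxeq, hBeq⟩ := encode_inj _ _ _ _ (hBne t) (hBred t) (hBalt t)
    (hBne t') (hBred t') (hBalt t') henc
  -- WLOG t < t' : handle both orders by a helper
  have main : ∀ s s' : Fin K, s.val < s'.val → x s = x s' → B s = B s' →
      ∃ A B C : List (Fin q), A ≠ [] ∧ B ≠ [] ∧ C ≠ [] ∧
        (A ++ B ++ A ++ C ++ A ++ B ++ A) <:+: w := by
    intro s s' hss hxe hBe
    set U := [x s] ++ B s ++ [x s] with hUdef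
    obtain ⟨a₁, b₁, hab₁⟩ := hBinf s
    obtain ⟨a₂, b₂, hab₂⟩ := hBinf s'
    rw [← hxe, ← hBe, ← hUdef] at hab₂
    rw [← hUdef] at hab₁
    -- w decompositions
    have hsplit : ∀ r : Fin K, w = w.take ((2*q+2)*r.val) ++
        ((w.drop ((2*q+2)*r.val)).take (2*q+1) ++ ((w.drop ((2*q+2)*r.val)).drop (2*q+1))) := by
      intro r
      rw [List.take_append_drop, List.take_append_drop]
    have hw1 : w = (w.take ((2*q+2)*s.val) ++ a₁) ++ U ++ (b₁ ++ (w.drop ((2*q+2)*s.val)).drop (2*q+1)) := by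
      conv_lhs => rw [hsplit s]
      rw [← hab₁]
      simp [List.append_assoc]
    have hw2 : w = (w.take ((2*q+2)*s'.val) ++ a₂) ++ U ++ (b₂ ++ (w.drop ((2*q+2)*s'.val)).drop (2*q+1)) := by
      conv_lhs => rw [hsplit s']
      rw [← hab₂]
      simp [List.append_assoc]
    set P := w.take ((2*q+2)*s.val) ++ a₁ with hPdef
    set P' := w.take ((2*q+2)*s'.val) ++ a₂ with hP'def
    -- length facts
    have hlen1 : a₁.length + U.length + b₁.length = 2*q+1 := by
      have h := congrArg List.length hab₁
      rw [hwin s] at h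
      simp only [List.length_append] at h
      omega
    have htake : (w.take ((2*q+2)*s.val)).length = (2*q+2)*s.val := by
      rw [List.length_take]
      have hmul : (2*q+2) * (s.val+1) ≤ (2*q+2) * K := Nat.mul_le_mul_left _ s.isLt
      have hexp : (2*q+2)*(s.val+1) = (2*q+2)*s.val + (2*q+2) := by ring
      rw [hKL]
      omega
    have htake' : (w.take ((2*q+2)*s'.val)).length = (2*q+2)*s'.val := by
      rw [List.length_take]
      have hmul : (2*q+2) * (s'.val+1) ≤ (2*q+2) * K := Nat.mul_le_mul_left _ s'.isLt
      have hexp : (2*q+2)*(s'.val+1) = (2*q+2)*s'.val + (2*q+2) := by ring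
      rw [hKL]
      omega
    have hPP' : P.length + U.length + 1 ≤ P'.length := by
      have h1 : P.length = (2*q+2)*s.val + a₁.length := by
        rw [hPdef, List.length_append, htake]
      have h2 : (2*q+2)*s'.val ≤ P'.length := by
        rw [hP'def, List.length_append, htake']
        omega
      have h3 : (2*q+2)*(s.val+1) ≤ (2*q+2)*s'.val := Nat.mul_le_mul_left _ hss
      have hexp : (2*q+2)*(s.val+1) = (2*q+2)*s.val + (2*q+2) := by ring
      omega
    -- extract the middle part
    have hpre1 : (P ++ U) <+: w := ⟨b₁ ++ (w.drop ((2*q+2)*s.val)).drop (2*q+1), hw1.symm⟩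
    have hpre2 : P' <+: w := ⟨U ++ (b₂ ++ (w.drop ((2*q+2)*s'.val)).drop (2*q+1)), by rw [← List.append_assoc]; exact hw2.symm⟩
    have hpre12 : (P ++ U) <+: P' := by
      refine List.prefix_of_prefix_length_le hpre1 hpre2 ?_
      rw [List.length_append]
      omega
    obtain ⟨C, hC⟩ := hpre12
    have hCne : C ≠ [] := by
      intro hc
      rw [hc, List.append_nil] at hC
      have := congrArg List.length hC
      rw [List.length_append] at this
      omega
    refine ⟨[x s], B s, C, by simp, hBne s, hCne, P, b₂ ++ (w.drop ((2*q+2)*s'.val)).drop (2*q+1), ?_⟩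
    conv_rhs => rw [hw2, ← hC]
    rw [hUdef]
    simp [List.append_assoc]
  rcases Nat.lt_or_ge t.val t'.val with h | h
  · exact main t t' h hxeq hBeq
  · have h' : t'.val < t.val := by
      rcases Nat.lt_or_ge t'.val t.val with h2 | h2
      · exact h2
      · exact absurd (Fin.ext (le_antisymm h2 h)) htt
    exact main t' t h' hxeq.symm hBeq.symm
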